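/- Let k be an algebraically closed field with char k ≠ 2. There is no graded isomorphism between the algebras U = k⟨x,y,z⟩/⟨xy − zx, yx − xz, y² + z²⟩ and U' = k⟨x,y,z⟩/⟨xy − zx, yx − xz, x² + y² + z²⟩. -/

import Mathlib

noncomputable section

/-- The free algebra on three generators `x, y, z` (indexed by `Fin 3`). -/
abbrev F3 (k : Type) [Field k] : Type := FreeAlgebra k (Fin 3)

noncomputable def X (k : Type) [Field k] : F3 k := FreeAlgebra.ι k 0
noncomputable def Y (k : Type) [Field k] : F3 k := FreeAlgebra.ι k 1
noncomputable def Z (k : Type) [Field k] : F3 k := FreeAlgebra.ι k 2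

/-- The quotient of the free algebra on `x, y, z` by the two-sided ideal
generated by the set `rels`. -/
abbrev quotAlg (k : Type) [Field k] (rels : Set (F3 k)) : Type :=
  RingQuot (fun a b : F3 k => a ∈ rels ∧ b = 0)

/-- The image of the `i`-th generator in the quotient algebra. -/
noncomputable def gen (k : Type) [Field k] (rels : Set (F3 k)) (i : Fin 3) :
    quotAlg k rels :=
  RingQuot.mkAlgHom k (fun a b : F3 k => a ∈ rels ∧ b = 0) (FreeAlgebra.ι k i)

/-- The `k`-linear span of the images of the generators in the quotient. -/
noncomputable def genSpan (k : Type) [Field k] (rels : Set (F3 k)) :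
    Submodule k (quotAlg k rels) :=
  Submodule.span k (Set.range (gen k rels))

/-- There is a graded isomorphism between the two quotient algebras:
a `k`-algebra isomorphism carrying the span of the generators onto the
span of the generators. -/
def GradedIso (k : Type) [Field k] (r1 r2 : Set (F3 k)) : Prop :=
  ∃ φ : quotAlg k r1 ≃ₐ[k] quotAlg k r2,
    Submodule.map φ.toLinearMap (genSpan k r1) = genSpan k r2

/-- Relations of `U = k⟨x,y,z⟩/⟨xy − zx, yx − xz, y² + z²⟩`. -/
noncomputable def Urel (k : Type) [Field k] : Set (F3 k) :=
  {X k * Y k - Z k * X k, Y k * X k - X k * Z k, Y k ^ 2 + Z k ^ 2}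


/-- Relations of `U' = k⟨x,y,z⟩/⟨xy − zx, yx − xz, x² + y² + z²⟩`. -/
noncomputable def U'rel (k : Type) [Field k] : Set (F3 k) :=
  {X k * Y k - Z k * X k, Y k * X k - X k * Z k, X k ^ 2 + Y k ^ 2 + Z k ^ 2}

open Matrix in
private lemma sbm_mul {k : Type} [Field k] (i j l m : Fin 10) (c d : k) :
    single i j c * single l m d =
      if j = l then single i m (c*d) else 0 := by
  split
  · next h => subst h; exact Matrix.single_mul_single_same ..
  · next h => exact Matrix.single_mul_single_of_ne (h := h) ..

open Matrix in
/-- The truncated (degree ≤ 2) left regular representation of `U'`,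
on the 10-dimensional space `k ⊕ V ⊕ W`. -/
private def Mf (k : Type) [Field k] : Fin 3 → Matrix (Fin 10) (Fin 10) k :=
![single 1 0 1 - single 4 1 1 - single 5 1 1 + single 7 2 1 + single 6 3 1,
  single 2 0 1 + single 6 1 1 + single 4 2 1 + single 8 3 1,
  single 3 0 1 + single 7 1 1 + single 9 2 1 + single 5 3 1]

private lemma relM1 {k : Type} [Field k] : Mf k 0 * Mf k 1 = Mf k 2 * Mf k 0 := by
  simp only [Mf, Matrix.cons_val_zero, Matrix.cons_val_one, Matrix.head_cons,
    Matrix.cons_val_two, Matrix.tail_cons]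
  simp only [add_mul, mul_add, sub_mul, mul_sub, sbm_mul, one_mul, Fin.isValue, Fin.reduceEq,
    reduceIte, if_true, if_false, smul_zero, add_zero, zero_add, sub_zero, zero_sub, smul_sub,
    smul_add]

private lemma relM2 {k : Type} [Field k] : Mf k 1 * Mf k 0 = Mf k 0 * Mf k 2 := by
  simp only [Mf, Matrix.cons_val_zero, Matrix.cons_val_one, Matrix.head_cons,
    Matrix.cons_val_two, Matrix.tail_cons]
  simp only [add_mul, mul_add, sub_mul, mul_sub, sbm_mul, one_mul, Fin.isValue, Fin.reduceEq,
    reduceIte, if_true, if_false, smul_zero, add_zero, zero_add, sub_zero, zero_sub, smul_sub,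
    smul_add]

private lemma relM3 {k : Type} [Field k] : Mf k 0 ^ 2 + Mf k 1 ^ 2 + Mf k 2 ^ 2 = 0 := by
  simp only [pow_two]
  simp only [Mf, Matrix.cons_val_zero, Matrix.cons_val_one, Matrix.head_cons,
    Matrix.cons_val_two, Matrix.tail_cons]
  simp only [add_mul, mul_add, sub_mul, mul_sub, sbm_mul, one_mul, Fin.isValue, Fin.reduceEq,
    reduceIte, if_true, if_false, smul_zero, add_zero, zero_add, sub_zero, zero_sub, smul_sub,
    smul_add]
  abel

open Matrix in
private lemma prodMf {k : Type} [Field k] (v w : Fin 3 → k) :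
  (∑ j, v j • Mf k j) * (∑ l, w l • Mf k l) =
    (v 1 * w 1 - v 0 * w 0) • single 4 0 (1:k)
    + (v 2 * w 2 - v 0 * w 0) • single 5 0 (1:k)
    + (v 0 * w 2 + v 1 * w 0) • single 6 0 (1:k)
    + (v 0 * w 1 + v 2 * w 0) • single 7 0 (1:k)
    + (v 1 * w 2) • single 8 0 (1:k)
    + (v 2 * w 1) • single 9 0 (1:k) := by
  simp only [Fin.sum_univ_three, Mf, Matrix.cons_val_zero, Matrix.cons_val_one, Matrix.head_cons,
    Matrix.cons_val_two, Matrix.tail_cons]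
  simp only [add_mul, mul_add, sub_mul, mul_sub, smul_mul_assoc, mul_smul_comm, sbm_mul,
    one_mul, Fin.isValue, Fin.reduceEq, reduceIte, if_true, if_false, smul_zero, add_zero,
    zero_add, sub_zero, smul_sub, smul_add, smul_smul]
  module

private lemma hFlift {k : Type} [Field k] : ∀ ⦃x y : F3 k⦄, (x ∈ U'rel k ∧ y = 0) →
    (FreeAlgebra.lift k (Mf k)) x = (FreeAlgebra.lift k (Mf k)) y := by
  rintro x y ⟨hx, rfl⟩
  simp only [U'rel, Set.mem_insert_iff, Set.mem_singleton_iff] at hx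
  rcases hx with rfl | rfl | rfl <;>
    simp only [_root_.map_sub, _root_.map_add, _root_.map_mul, map_pow, _root_.map_zero,
      X, Y, Z, FreeAlgebra.lift_ι_apply]
  · rw [sub_eq_zero]; exact relM1
  · rw [sub_eq_zero]; exact relM2
  · exact relM3

/-- The induced representation of the quotient algebra `U'`. -/
private noncomputable def ψq (k : Type) [Field k] :
    quotAlg k (U'rel k) →ₐ[k] Matrix (Fin 10) (Fin 10) k :=
  RingQuot.liftAlgHom k ⟨FreeAlgebra.lift k (Mf k), hFlift⟩

private lemma ψq_gen {k : Type} [Field k] (j : Fin 3) : ψq k (gen k (U'rel k) j) = Mf k j := by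
  show (RingQuot.liftAlgHom k ⟨FreeAlgebra.lift k (Mf k), hFlift⟩)
    (RingQuot.mkAlgHom k _ (FreeAlgebra.ι k j)) = Mf k j
  rw [RingQuot.liftAlgHom_mkAlgHom_apply, FreeAlgebra.lift_ι_apply]

private def A2m (k : Type) [Field k] : Matrix (Fin 3) (Fin 3) k := !![0,1,-1;1,0,0;-1,0,0]
private def Bmm (k : Type) [Field k] : Matrix (Fin 3) (Fin 3) k := !![0,0,0;0,1,0;0,0,1]

private lemma detA2 {k : Type} [Field k] : (A2m k).det = 0 := by
  simp [A2m, Matrix.det_fin_three, Matrix.vecHead, Matrix.vecTail]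

private lemma detBm {k : Type} [Field k] : (Bmm k).det = 0 := by
  simp [Bmm, Matrix.det_fin_three, Matrix.vecHead, Matrix.vecTail]

private lemma detSum {k : Type} [Field k] : (A2m k + Bmm k).det = -2 := by
  simp [A2m, Bmm, Matrix.det_fin_three]
  norm_num

private lemma detDiff {k : Type} [Field k] : (A2m k - Bmm k).det = 2 := by
  simp [A2m, Bmm, Matrix.det_fin_three]
  norm_num

private lemma detComb {k : Type} [Field k] (s t : k) :
    (s • A2m k + t • (1 : Matrix (Fin 3) (Fin 3) k)).det = t^3 - 2*s^2*t := by
  simp [A2m, Matrix.det_fin_three, Matrix.one_apply, Matrix.vecHead, Matrix.vecTail]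
  ring

private lemma endgame {k : Type} [Field k] (α β γ δ D2 : k) (h2 : (2:k) ≠ 0) (hD2 : D2 ≠ 0)
    (FA : β^3 - 2*α^2*β = 0) (FB : δ^3 - 2*γ^2*δ = 0)
    (FP : (β+δ)^3 - 2*(α+γ)^2*(β+δ) = -2*D2)
    (FM : (β-δ)^3 - 2*(α-γ)^2*(β-δ) = 2*D2) : False := by
  have h4 : (4:k) ≠ 0 := by
    have := mul_ne_zero h2 h2; norm_num at this ⊢; exact this
  have hp2 : 2*(3*β^2*δ - 2*α^2*δ - 4*α*β*γ) = -4*D2 := by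
    linear_combination FP - FM - 2*FB
  have hp3 : 2*(3*β*δ^2 - 2*β*γ^2 - 4*α*γ*δ) = 0 := by
    linear_combination FP + FM - 2*FA
  by_cases hβ : β = 0
  · have hαδ : 4*(α^2*δ) = 4*D2 := by
      linear_combination -hp2 + (6*β*δ - 8*α*γ)*hβ
    have hδ : δ ≠ 0 := by
      intro h
      exact hD2 (by
        have h40 : 4*D2 = 0 := by linear_combination -hαδ + 4*α^2*h
        exact (mul_eq_zero.mp h40).resolve_left h4)
    have hα : α ≠ 0 := by
      intro h
      exact hD2 (by
        have h40 : 4*D2 = 0 := by linear_combination -hαδ + 4*α*δ*h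
        exact (mul_eq_zero.mp h40).resolve_left h4)
    have h8 : (8:k) ≠ 0 := by
      have := mul_ne_zero h2 (mul_ne_zero h2 h2); norm_num at this ⊢; exact this
    have hγ8 : (8:k)*(α*(γ*δ)) = 0 := by
      linear_combination -hp3 + (6*δ^2 - 4*γ^2)*hβ
    have hγ : γ = 0 := by
      by_contra hγ0
      exact (mul_ne_zero h8 (mul_ne_zero hα (mul_ne_zero hγ0 hδ))) hγ8
    have hδ3 : δ^3 = 0 := by linear_combination FB + 2*γ*δ*hγ
    exact hδ (pow_eq_zero_iff (by norm_num) |>.mp hδ3)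
  · have hβ2 : β^2 = 2*α^2 := by
      have hmul : β*(β^2 - 2*α^2) = 0 := by linear_combination FA
      have := (mul_eq_zero.mp hmul).resolve_left hβ
      linear_combination this
    have hT4 : 4*(β*(β*δ - 2*α*γ)) = -4*D2 := by
      linear_combination hp2 - 2*δ*hβ2
    by_cases hδ0 : δ = 0
    · have hγ2 : 4*(β*γ^2) = 0 := by
        linear_combination -hp3 + (6*β*δ - 8*α*γ)*hδ0
      have hγ : γ = 0 := by
        have hq := (mul_eq_zero.mp hγ2).resolve_left h4
        have := (mul_eq_zero.mp hq).resolve_left hβ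
        exact pow_eq_zero_iff (by norm_num) |>.mp this
      have h40 : 4*D2 = 0 := by
        linear_combination hT4 - 4*β^2*hδ0 + 8*α*β*hγ
      exact hD2 ((mul_eq_zero.mp h40).resolve_left h4)
    · have hδ2 : δ^2 = 2*γ^2 := by
        have hmul : δ*(δ^2 - 2*γ^2) = 0 := by linear_combination FB
        have := (mul_eq_zero.mp hmul).resolve_left hδ0
        linear_combination this
      have hS : 4*(δ*(β*δ - 2*α*γ)) = 0 := by
        linear_combination hp3 - 2*β*hδ2
      have h0 : β*δ - 2*α*γ = 0 := by
        have hq := (mul_eq_zero.mp hS).resolve_left h4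
        exact (mul_eq_zero.mp hq).resolve_left hδ0
      have h40 : 4*D2 = 0 := by
        linear_combination hT4 - 4*β*h0
      exact hD2 ((mul_eq_zero.mp h40).resolve_left h4)

set_option maxHeartbeats 2000000 in
theorem stmt4 (k : Type) [Field k] [IsAlgClosed k] (hchar : ringChar k ≠ 2) :
    ¬ GradedIso k (Urel k) (U'rel k) := by
  rintro ⟨φ, hφ⟩
  classical
  have h2 : (2:k) ≠ 0 := by
    intro h
    have h' : ((2:ℕ):k) = 0 := by exact_mod_cast h
    have hdvd : ringChar k ∣ 2 := (ringChar.spec k 2).mp h'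
    rcases (Nat.dvd_prime Nat.prime_two).mp hdvd with h1 | h2'
    · have : ((1:ℕ):k) = 0 := (ringChar.spec k 1).mpr (h1 ▸ dvd_refl _)
      simp at this
    · exact hchar h2'
  -- coefficients of images of generators
  have hmem : ∀ i, φ (gen k (Urel k) i) ∈ genSpan k (U'rel k) := by
    intro i
    rw [← hφ]
    exact Submodule.mem_map.mpr ⟨gen k (Urel k) i, Submodule.subset_span ⟨i, rfl⟩, rfl⟩
  have hex : ∀ i, ∃ t : Fin 3 → k, ∑ j, t j • gen k (U'rel k) j = φ (gen k (Urel k) i) := by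
    intro i
    have := hmem i
    simp only [genSpan] at this
    exact (Submodule.mem_span_range_iff_exists_fun k).mp this
  choose c hc using hex
  have hN : ∀ i, ψq k (φ (gen k (Urel k) i)) = ∑ j, c i j • Mf k j := by
    intro i
    rw [← hc i, map_sum]
    simp only [_root_.map_smul, ψq_gen]
  -- the images span: right-inverse coefficients
  have hex' : ∀ j, ∃ t : Fin 3 → k,
      ∑ i, t i • (φ (gen k (Urel k) i)) = gen k (U'rel k) j := by
    intro j
    have hmem' : gen k (U'rel k) j ∈ Submodule.map φ.toLinearMap (genSpan k (Urel k)) := by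
      rw [hφ]; exact Submodule.subset_span ⟨j, rfl⟩
    obtain ⟨s, hs, hφs⟩ := hmem'
    simp only [genSpan] at hs
    obtain ⟨t, ht⟩ := (Submodule.mem_span_range_iff_exists_fun k).mp hs
    refine ⟨t, ?_⟩
    rw [← hφs, ← ht]
    simp [map_sum, _root_.map_smul]
  choose dd hdd using hex'
  have hMd : ∀ j, ∑ i, dd j i • (∑ l, c i l • Mf k l) = Mf k j := by
    intro j
    have h := congrArg (ψq k) (hdd j)
    rw [map_sum] at h
    simp only [_root_.map_smul, hN, ψq_gen] at h
    exact h
  -- relations satisfied by the generators of U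
  have hr1 : gen k (Urel k) 0 * gen k (Urel k) 1 = gen k (Urel k) 2 * gen k (Urel k) 0 := by
    have h := RingQuot.mkAlgHom_rel k (s := fun a b : F3 k => a ∈ Urel k ∧ b = 0)
      (x := X k * Y k - Z k * X k) (y := 0) ⟨Set.mem_insert _ _, rfl⟩
    rw [_root_.map_zero, _root_.map_sub, sub_eq_zero, _root_.map_mul, _root_.map_mul] at h
    exact h
  have hr3 : gen k (Urel k) 1 ^ 2 + gen k (Urel k) 2 ^ 2 = 0 := by
    have h := RingQuot.mkAlgHom_rel k (s := fun a b : F3 k => a ∈ Urel k ∧ b = 0)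
      (x := Y k ^ 2 + Z k ^ 2) (y := 0)
      ⟨Set.mem_insert_of_mem _ (Set.mem_insert_of_mem _ rfl), rfl⟩
    rw [_root_.map_zero, _root_.map_add, map_pow, map_pow] at h
    exact h
  -- push the relations into the matrix algebra
  have hg1 : (∑ j, c 0 j • Mf k j) * (∑ j, c 1 j • Mf k j)
      = (∑ j, c 2 j • Mf k j) * (∑ j, c 0 j • Mf k j) := by
    have h := congrArg (fun t => ψq k (φ t)) hr1
    simp only [_root_.map_mul] at h
    rw [hN 0, hN 1, hN 2] at h
    exact h
  have hg3 : (∑ j, c 1 j • Mf k j) * (∑ j, c 1 j • Mf k j)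
      + (∑ j, c 2 j • Mf k j) * (∑ j, c 2 j • Mf k j) = 0 := by
    have h := congrArg (fun t => ψq k (φ t)) hr3
    simp only [_root_.map_add, map_pow, _root_.map_zero] at h
    rw [hN 1, hN 2, pow_two, pow_two] at h
    exact h
  rw [prodMf, prodMf] at hg1
  rw [prodMf, prodMf] at hg3
  -- extract scalar equations
  have E1 : c 0 1 * c 1 1 - c 0 0 * c 1 0 = c 2 1 * c 0 1 - c 2 0 * c 0 0 := by
    have h := congrFun (congrFun hg1 4) 0
    simp [Matrix.add_apply, Matrix.smul_apply, Matrix.single, Matrix.of_apply] at h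
    linear_combination h
  have E2 : c 0 2 * c 1 2 - c 0 0 * c 1 0 = c 2 2 * c 0 2 - c 2 0 * c 0 0 := by
    have h := congrFun (congrFun hg1 5) 0
    simp [Matrix.add_apply, Matrix.smul_apply, Matrix.single, Matrix.of_apply] at h
    linear_combination h
  have E3 : c 0 0 * c 1 2 + c 0 1 * c 1 0 = c 2 0 * c 0 2 + c 2 1 * c 0 0 := by
    have h := congrFun (congrFun hg1 6) 0
    simp [Matrix.add_apply, Matrix.smul_apply, Matrix.single, Matrix.of_apply] at h
    linear_combination h
  have E4 : c 0 0 * c 1 1 + c 0 2 * c 1 0 = c 2 0 * c 0 1 + c 2 2 * c 0 0 := by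
    have h := congrFun (congrFun hg1 7) 0
    simp [Matrix.add_apply, Matrix.smul_apply, Matrix.single, Matrix.of_apply] at h
    linear_combination h
  have E5 : c 0 1 * c 1 2 = c 2 1 * c 0 2 := by
    have h := congrFun (congrFun hg1 8) 0
    simp [Matrix.add_apply, Matrix.smul_apply, Matrix.single, Matrix.of_apply] at h
    linear_combination h
  have E6 : c 0 2 * c 1 1 = c 2 2 * c 0 1 := by
    have h := congrFun (congrFun hg1 9) 0
    simp [Matrix.add_apply, Matrix.smul_apply, Matrix.single, Matrix.of_apply] at h
    linear_combination h
  have G1 : (c 1 1 * c 1 1 - c 1 0 * c 1 0) + (c 2 1 * c 2 1 - c 2 0 * c 2 0) = 0 := by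
    have h := congrFun (congrFun hg3 4) 0
    simp [Matrix.add_apply, Matrix.smul_apply, Matrix.zero_apply, Matrix.single,
      Matrix.of_apply] at h
    linear_combination h
  have G2 : (c 1 2 * c 1 2 - c 1 0 * c 1 0) + (c 2 2 * c 2 2 - c 2 0 * c 2 0) = 0 := by
    have h := congrFun (congrFun hg3 5) 0
    simp [Matrix.add_apply, Matrix.smul_apply, Matrix.zero_apply, Matrix.single,
      Matrix.of_apply] at h
    linear_combination h
  have G3 : (c 1 0 * c 1 2 + c 1 1 * c 1 0) + (c 2 0 * c 2 2 + c 2 1 * c 2 0) = 0 := by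
    have h := congrFun (congrFun hg3 6) 0
    simp [Matrix.add_apply, Matrix.smul_apply, Matrix.zero_apply, Matrix.single,
      Matrix.of_apply] at h
    linear_combination h
  have G4 : c 1 1 * c 1 2 + c 2 1 * c 2 2 = 0 := by
    have h := congrFun (congrFun hg3 8) 0
    simp [Matrix.add_apply, Matrix.smul_apply, Matrix.zero_apply, Matrix.single,
      Matrix.of_apply] at h
    linear_combination h
  -- invertibility equations
  have Ksimp : ∀ j : Fin 3, ∀ ρ : Fin 10,
      (∑ i, dd j i • (∑ l, c i l • Mf k l)) ρ 0 = Mf k j ρ 0 := by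
    intro j ρ; rw [hMd j]
  have K00 := Ksimp 0 1
  have K01 := Ksimp 0 2
  have K02 := Ksimp 0 3
  have K10 := Ksimp 1 1
  have K11 := Ksimp 1 2
  have K12 := Ksimp 1 3
  have K20 := Ksimp 2 1
  have K21 := Ksimp 2 2
  have K22 := Ksimp 2 3
  simp [Matrix.sum_apply, Matrix.smul_apply, Fin.sum_univ_three, Mf, Matrix.single,
    Matrix.of_apply, Matrix.vecHead, Matrix.vecTail]
    at K00 K01 K02 K10 K11 K12 K20 K21 K22
  -- matrices
  obtain ⟨CC, hCCdef⟩ : ∃ m : Matrix (Fin 3) (Fin 3) k,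
      m = !![c 0 0, c 0 1, c 0 2; c 1 0, c 1 1, c 1 2; c 2 0, c 2 1, c 2 2] := ⟨_, rfl⟩
  obtain ⟨CT, hCTdef⟩ : ∃ m : Matrix (Fin 3) (Fin 3) k,
      m = !![c 0 0, c 1 0, c 2 0; c 0 1, c 1 1, c 2 1; c 0 2, c 1 2, c 2 2] := ⟨_, rfl⟩
  obtain ⟨DM, hDMdef⟩ : ∃ m : Matrix (Fin 3) (Fin 3) k,
      m = !![dd 0 0, dd 0 1, dd 0 2; dd 1 0, dd 1 1, dd 1 2; dd 2 0, dd 2 1, dd 2 2] := ⟨_, rfl⟩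
  obtain ⟨α, hα⟩ : ∃ x : k, x = c 0 0 * c 1 1 + c 0 1 * c 1 0 - c 0 0 * c 2 1 - c 0 1 * c 2 0 :=
    ⟨_, rfl⟩
  obtain ⟨β, hβ⟩ : ∃ x : k, x = 2*(c 0 0 * c 1 0 - c 0 0 * c 2 0) := ⟨_, rfl⟩
  obtain ⟨γ, hγ⟩ : ∃ x : k, x = c 1 0 * c 1 1 + c 2 0 * c 2 1 := ⟨_, rfl⟩
  obtain ⟨δ, hδ⟩ : ∃ x : k, x = c 1 0 * c 1 0 + c 2 0 * c 2 0 := ⟨_, rfl⟩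
  have hone : DM * CC = 1 := by
    subst hDMdef hCCdef
    ext i j
    fin_cases i <;> fin_cases j <;>
      simp [Matrix.mul_apply, Fin.sum_univ_three, Matrix.one_apply, Matrix.vecHead,
        Matrix.vecTail]
    · linear_combination K00
    · linear_combination K01
    · linear_combination K02
    · linear_combination K10
    · linear_combination K11
    · linear_combination K12
    · linear_combination K20
    · linear_combination K21
    · linear_combination K22
  have hdet1 : DM.det * CC.det = 1 := by rw [← Matrix.det_mul, hone, Matrix.det_one]
  have hCC0 : CC.det ≠ 0 := by
    intro h; rw [h, mul_zero] at hdet1; exact zero_ne_one hdet1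
  have hCT : CT.det = CC.det := by
    rw [hCTdef, hCCdef]
    simp [Matrix.det_fin_three, Matrix.vecHead, Matrix.vecTail]
    ring
  -- the quadric pencil identities
  have hA : CT * A2m k * CC = α • A2m k + β • (1 : Matrix (Fin 3) (Fin 3) k) := by
    rw [hCTdef, hCCdef]
    ext i j
    fin_cases i <;> fin_cases j <;>
      simp [A2m, Matrix.mul_apply, Fin.sum_univ_three, Matrix.one_apply, Matrix.vecHead,
        Matrix.vecTail]
    · linear_combination -hβ
    · linear_combination -hα
    · linear_combination E3 + E4 + hα
    · linear_combination -hα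
    · linear_combination 2*E1 - hβ
    · linear_combination E5 + E6
    · linear_combination E3 + E4 + hα
    · linear_combination E5 + E6
    · linear_combination 2*E2 - hβ
  have hB : CT * Bmm k * CC = γ • A2m k + δ • (1 : Matrix (Fin 3) (Fin 3) k) := by
    rw [hCTdef, hCCdef]
    ext i j
    fin_cases i <;> fin_cases j <;>
      simp [A2m, Bmm, Matrix.mul_apply, Fin.sum_univ_three, Matrix.one_apply, Matrix.vecHead,
        Matrix.vecTail]
    · linear_combination -hδ
    · linear_combination -hγ
    · linear_combination G3 + hγ
    · linear_combination -hγ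
    · linear_combination G1 - hδ
    · linear_combination G4
    · linear_combination G3 + hγ
    · linear_combination G4
    · linear_combination G2 - hδ
  have hAB : CT * (A2m k + Bmm k) * CC =
      (α + γ) • A2m k + (β + δ) • (1 : Matrix (Fin 3) (Fin 3) k) := by
    rw [Matrix.mul_add, Matrix.add_mul, hA, hB, add_smul, add_smul]
    abel
  have hAmB : CT * (A2m k - Bmm k) * CC =
      (α - γ) • A2m k + (β - δ) • (1 : Matrix (Fin 3) (Fin 3) k) := by
    rw [Matrix.mul_sub, Matrix.sub_mul, hA, hB, sub_smul, sub_smul]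
    abel
  -- determinants
  have FA : β^3 - 2*α^2*β = 0 := by
    have h := congrArg Matrix.det hA
    rw [Matrix.det_mul, Matrix.det_mul, detA2, detComb, mul_zero, zero_mul] at h
    linear_combination -h
  have FB : δ^3 - 2*γ^2*δ = 0 := by
    have h := congrArg Matrix.det hB
    rw [Matrix.det_mul, Matrix.det_mul, detBm, detComb, mul_zero, zero_mul] at h
    linear_combination -h
  have FP : (β+δ)^3 - 2*(α+γ)^2*(β+δ) = -2*(CC.det^2) := by
    have h := congrArg Matrix.det hAB
    rw [Matrix.det_mul, Matrix.det_mul, detSum, detComb] at h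
    linear_combination -h - 2*CC.det*hCT
  have FM : (β-δ)^3 - 2*(α-γ)^2*(β-δ) = 2*(CC.det^2) := by
    have h := congrArg Matrix.det hAmB
    rw [Matrix.det_mul, Matrix.det_mul, detDiff, detComb] at h
    linear_combination -h + 2*CC.det*hCT
  exact endgame α β γ δ (CC.det^2) h2 (pow_ne_zero 2 hCC0) FA FB FP FM
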